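/- Let 0 < a ≤ b be natural numbers and let r ≤ a + b − 1. Then no nonzero homogeneous polynomial G of degree r in ℝ[y₀,y₁] lying in the ideal generated by y₀^{a+1} and y₁^{b+1} can be written as a product of r pairwise linearly independent real linear forms. -/

import Mathlib

open MvPolynomial

namespace NoSqfAux

noncomputable def Hq (p : Polynomial ℝ) : ℝ :=
  (Polynomial.derivative p).eval 0 ^ 2 -
    (Polynomial.derivative (Polynomial.derivative p)).eval 0 * p.eval 0

lemma Hq_linear_mul (a : ℝ) (p : Polynomial ℝ) :
    Hq ((Polynomial.X - Polynomial.C a) * p) = p.eval 0 ^ 2 + a ^ 2 * Hq p := by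
  simp only [Hq, Polynomial.derivative_mul, Polynomial.derivative_sub,
    Polynomial.derivative_X, Polynomial.derivative_C, sub_zero, one_mul,
    Polynomial.derivative_add, Polynomial.derivative_one, Polynomial.eval_add,
    Polynomial.eval_mul, Polynomial.eval_sub, Polynomial.eval_X, Polynomial.eval_C,
    Polynomial.eval_one, Polynomial.derivative_zero, zero_mul, zero_add, zero_sub]
  ring

lemma Hq_C_mul (c : ℝ) (p : Polynomial ℝ) : Hq (Polynomial.C c * p) = c ^ 2 * Hq p := by
  simp only [Hq, Polynomial.derivative_mul, Polynomial.derivative_C, zero_mul, zero_add,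
    Polynomial.eval_add, Polynomial.eval_mul, Polynomial.eval_C]
  ring

noncomputable def Mp (s : Multiset ℝ) : Polynomial ℝ :=
  (s.map fun r => Polynomial.X - Polynomial.C r).prod

lemma Mp_cons (a : ℝ) (s : Multiset ℝ) :
    Mp (a ::ₘ s) = (Polynomial.X - Polynomial.C a) * Mp s := by
  simp [Mp]

lemma Hq_Mp_nonneg (s : Multiset ℝ) : 0 ≤ Hq (Mp s) := by
  induction s using Multiset.induction_on with
  | empty => simp [Mp, Hq]
  | cons a t ih =>
    rw [Mp_cons, Hq_linear_mul]
    have h := mul_nonneg (sq_nonneg a) ih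
    nlinarith [sq_nonneg ((Mp t).eval 0)]

lemma Mp_eval_zero_ne (s : Multiset ℝ) (h : (0 : ℝ) ∉ s) : (Mp s).eval 0 ≠ 0 := by
  rw [Mp, Polynomial.eval_multiset_prod]
  intro hzero
  rw [Multiset.prod_eq_zero_iff] at hzero
  simp only [Multiset.map_map, Multiset.mem_map, Function.comp_apply] at hzero
  obtain ⟨r, hr, hr0⟩ := hzero
  simp only [Polynomial.eval_sub, Polynomial.eval_X, Polynomial.eval_C, zero_sub,
    neg_eq_zero] at hr0
  exact h (hr0 ▸ hr)

lemma Hq_Mp_pos (s : Multiset ℝ) (hs : s ≠ 0) (h0 : (0 : ℝ) ∉ s) : 0 < Hq (Mp s) := by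
  obtain ⟨a, ha⟩ := Multiset.exists_mem_of_ne_zero hs
  obtain ⟨t, rfl⟩ := Multiset.exists_cons_of_mem ha
  rw [Mp_cons, Hq_linear_mul]
  have h0t : (0 : ℝ) ∉ t := fun h => h0 (Multiset.mem_cons_of_mem h)
  have h1 : 0 < (Mp t).eval 0 ^ 2 := by
    have := Mp_eval_zero_ne t h0t
    positivity
  have h2 := Hq_Mp_nonneg t
  nlinarith [mul_nonneg (sq_nonneg a) h2]

lemma Hq_pos_of_roots (q : Polynomial ℝ) (hrc : Multiset.card q.roots = q.natDegree)
    (hd : 0 < q.natDegree) (he : q.eval 0 ≠ 0) : 0 < Hq q := by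
  have hq0 : q ≠ 0 := fun h => by simp [h] at hd
  have hfac := Polynomial.C_leadingCoeff_mul_prod_multiset_X_sub_C hrc
  have hHq : Hq q = q.leadingCoeff ^ 2 * Hq (Mp q.roots) := by
    conv_lhs => rw [← hfac]
    exact Hq_C_mul _ _
  rw [hHq]
  have hlc : q.leadingCoeff ≠ 0 := Polynomial.leadingCoeff_ne_zero.mpr hq0
  have hroots_ne : q.roots ≠ 0 := by
    intro h
    rw [h] at hrc
    simp at hrc
    omega
  have h0r : (0 : ℝ) ∉ q.roots := by
    intro h
    exact he ((Polynomial.mem_roots'.mp h).2)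
  exact mul_pos (by positivity) (Hq_Mp_pos _ hroots_ne h0r)


lemma natDegree_deriv (p : Polynomial ℝ) (hp : p.natDegree ≠ 0) :
    (Polynomial.derivative p).natDegree = p.natDegree - 1 := by
  refine le_antisymm (Polynomial.natDegree_derivative_le p) ?_
  apply Polynomial.le_natDegree_of_ne_zero
  rw [Polynomial.coeff_derivative]
  have h1 : p.natDegree - 1 + 1 = p.natDegree := Nat.succ_pred_eq_of_pos (Nat.pos_of_ne_zero hp)
  rw [h1]
  have hp0 : p ≠ 0 := fun h => hp (by simp [h])
  have hlc : p.coeff p.natDegree ≠ 0 := Polynomial.leadingCoeff_ne_zero.mpr hp0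
  apply mul_ne_zero hlc
  exact Nat.cast_add_one_ne_zero (p.natDegree - 1)

lemma rr_deriv (p : Polynomial ℝ) (h : Multiset.card p.roots = p.natDegree) :
    Multiset.card (Polynomial.derivative p).roots = (Polynomial.derivative p).natDegree := by
  by_cases hd : Polynomial.derivative p = 0
  · simp [hd]
  have hp : p.natDegree ≠ 0 := fun h0 => hd (Polynomial.derivative_of_natDegree_zero h0)
  refine le_antisymm (Polynomial.card_roots' _) ?_
  have h2 := Polynomial.card_roots_le_derivative p
  rw [natDegree_deriv p hp]
  omega

lemma rr_iter (p : Polynomial ℝ) (h : Multiset.card p.roots = p.natDegree) (j : ℕ)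
    (hj : j ≤ p.natDegree) :
    Multiset.card (Polynomial.derivative^[j] p).roots = (Polynomial.derivative^[j] p).natDegree ∧
      (Polynomial.derivative^[j] p).natDegree = p.natDegree - j := by
  induction j with
  | zero => exact ⟨h, by simp⟩
  | succ n ih =>
    obtain ⟨ih1, ih2⟩ := ih (by omega)
    have hnd : (Polynomial.derivative^[n] p).natDegree ≠ 0 := by omega
    rw [Function.iterate_succ_apply']
    exact ⟨rr_deriv _ ih1, by rw [natDegree_deriv _ hnd, ih2]; omega⟩

lemma univariate_gap (p : Polynomial ℝ) (hrc : Multiset.card p.roots = p.natDegree) (k : ℕ)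
    (h1 : p.coeff k = 0) (h2 : p.coeff (k + 1) = 0)
    (hbelow : ∃ i, i < k ∧ p.coeff i ≠ 0) (hdeg : k + 1 < p.natDegree) : False := by
  classical
  obtain ⟨i0, hi0k, hi0⟩ := hbelow
  have hk1 : 1 ≤ k := by omega
  set P : ℕ → Prop := fun i => p.coeff i ≠ 0 with hP
  set j := Nat.findGreatest P (k - 1) with hjdef
  have hjspec : P j := Nat.findGreatest_spec (m := i0) (by omega) hi0
  have hjle : j ≤ k - 1 := Nat.findGreatest_le _
  have hmax : ∀ i, j < i → i ≤ k + 1 → p.coeff i = 0 := by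
    intro i hji hik
    by_cases hik' : i ≤ k - 1
    · by_contra hne
      exact Nat.findGreatest_is_greatest hji hik' hne
    · have : i = k ∨ i = k + 1 := by omega
      rcases this with rfl | rfl
      · exact h1
      · exact h2
  set q := Polynomial.derivative^[j] p with hq
  obtain ⟨hqrc, hqdeg⟩ := rr_iter p hrc j (by omega)
  have hq0 : q.coeff 0 ≠ 0 := by
    rw [hq, Polynomial.coeff_iterate_derivative, zero_add, nsmul_eq_mul]
    apply mul_ne_zero _ hjspec
    simpa [Nat.descFactorial_self] using Nat.factorial_ne_zero j
  have hq1 : q.coeff 1 = 0 := by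
    rw [hq, Polynomial.coeff_iterate_derivative, hmax (1 + j) (by omega) (by omega), smul_zero]
  have hq2 : q.coeff 2 = 0 := by
    rw [hq, Polynomial.coeff_iterate_derivative, hmax (2 + j) (by omega) (by omega), smul_zero]
  have hqd : 0 < q.natDegree := by rw [hq]; omega
  have heval : q.eval 0 ≠ 0 := by rwa [← Polynomial.coeff_zero_eq_eval_zero]
  have hpos := Hq_pos_of_roots q hqrc hqd heval
  have e1 : (Polynomial.derivative q).eval 0 = 0 := by
    rw [← Polynomial.coeff_zero_eq_eval_zero, Polynomial.coeff_derivative, hq1, zero_mul]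
  have e2 : (Polynomial.derivative (Polynomial.derivative q)).eval 0 = 0 := by
    rw [← Polynomial.coeff_zero_eq_eval_zero, Polynomial.coeff_derivative,
      Polynomial.coeff_derivative, hq2, zero_mul, zero_mul]
  rw [Hq, e1, e2] at hpos
  simp at hpos
lemma fin2_eq (m : Fin 2 →₀ ℕ) : m = Finsupp.single 0 (m 0) + Finsupp.single 1 (m 1) := by
  ext i
  fin_cases i <;> simp [Finsupp.single_apply]

lemma degree_fin2 (m : Fin 2 →₀ ℕ) : m.degree = m 0 + m 1 := by
  rw [Finsupp.degree_apply, Finset.sum_subset (Finset.subset_univ _)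
    (fun x _ hx => Finsupp.notMem_support_iff.mp hx)]
  exact Fin.sum_univ_two m

lemma single_ne_single : (Finsupp.single 0 1 : Fin 2 →₀ ℕ) ≠ Finsupp.single 1 1 := by
  intro h
  have := DFunLike.congr_fun h 0
  simp [Finsupp.single_apply] at this

lemma hom1_decomp (q : MvPolynomial (Fin 2) ℝ) (hq : q.IsHomogeneous 1) :
    q = C (coeff (Finsupp.single 0 1) q) * X 0 + C (coeff (Finsupp.single 1 1) q) * X 1 := by
  ext m
  rw [coeff_add, coeff_C_mul, coeff_C_mul, coeff_X', coeff_X']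
  by_cases hm : m.degree = 1
  · have h01 : m 0 + m 1 = 1 := by rw [← degree_fin2]; exact hm
    have hcase : m = Finsupp.single 0 1 ∨ m = Finsupp.single 1 1 := by
      rcases Nat.eq_zero_or_pos (m 0) with h0 | h0
      · right
        have h1 : m 1 = 1 := by omega
        rw [fin2_eq m, h0, h1, Finsupp.single_zero, zero_add]
      · left
        have h0' : m 0 = 1 := by omega
        have h1 : m 1 = 0 := by omega
        rw [fin2_eq m, h0', h1, Finsupp.single_zero, add_zero]
    rcases hcase with rfl | rfl
    · rw [if_pos rfl, if_neg (Ne.symm single_ne_single)]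
      ring
    · rw [if_pos rfl, if_neg single_ne_single]
      ring
  · rw [hq.coeff_eq_zero hm, if_neg, if_neg, mul_zero, mul_zero, add_zero]
    · intro h
      apply hm
      rw [← h, degree_fin2]
      simp [Finsupp.single_apply]
    · intro h
      apply hm
      rw [← h, degree_fin2]
      simp [Finsupp.single_apply]

noncomputable def φ : MvPolynomial (Fin 2) ℝ →ₐ[ℝ] Polynomial ℝ :=
  aeval ![Polynomial.X, 1]

lemma φ_monomial (m : Fin 2 →₀ ℕ) (c : ℝ) :
    φ (monomial m c) = Polynomial.C c * Polynomial.X ^ (m 0) := by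
  rw [φ, aeval_monomial, Finsupp.prod_fintype _ _ (fun i => pow_zero _), Fin.prod_univ_two]
  simp [Polynomial.algebraMap_eq]

lemma coeff_φ (G : MvPolynomial (Fin 2) ℝ) (r : ℕ) (hG : G.IsHomogeneous r) (k : ℕ)
    (hk : k ≤ r) :
    (φ G).coeff k = coeff (Finsupp.single 0 k + Finsupp.single 1 (r - k)) G := by
  classical
  set m0 : Fin 2 →₀ ℕ := Finsupp.single 0 k + Finsupp.single 1 (r - k) with hm0
  have hm00 : m0 0 = k := by simp [hm0, Finsupp.single_apply]
  conv_lhs => rw [G.as_sum]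
  rw [map_sum, Polynomial.finset_sum_coeff]
  have hterm : ∀ m ∈ G.support,
      (φ (monomial m (coeff m G))).coeff k = if m = m0 then coeff m0 G else 0 := by
    intro m hm
    rw [φ_monomial, Polynomial.coeff_C_mul, Polynomial.coeff_X_pow]
    by_cases hmm : m = m0
    · subst hmm
      rw [if_pos rfl, if_pos hm00.symm, mul_one]
    · rw [if_neg hmm, if_neg, mul_zero]
      intro hkm
      apply hmm
      have hdeg : m.degree = r := by
        by_contra hne
        exact (mem_support_iff.mp hm) (hG.coeff_eq_zero hne)
      have hsum := degree_fin2 m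
      have hm1 : m 1 = r - k := by omega
      calc m = Finsupp.single 0 (m 0) + Finsupp.single 1 (m 1) := fin2_eq m
        _ = m0 := by rw [← hkm, hm1]
  rw [Finset.sum_congr rfl hterm, Finset.sum_ite_eq' G.support m0]
  by_cases h : m0 ∈ G.support
  · rw [if_pos h]
  · rw [if_neg h]
    exact (notMem_support_iff.mp h).symm

lemma coeff_zero_of_mem (a b r k : ℕ) (G : MvPolynomial (Fin 2) ℝ)
    (hGI : G ∈ Ideal.span {(X 0 : MvPolynomial (Fin 2) ℝ) ^ (a + 1), X 1 ^ (b + 1)})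
    (hka : k ≤ a) (hkb : r - k ≤ b) :
    coeff (Finsupp.single 0 k + Finsupp.single 1 (r - k)) G = 0 := by
  rw [Ideal.mem_span_pair] at hGI
  obtain ⟨u, v, huv⟩ := hGI
  rw [← huv, coeff_add, X_pow_eq_monomial, X_pow_eq_monomial,
    coeff_mul_monomial', coeff_mul_monomial', if_neg, if_neg, add_zero]
  · intro hle
    have := Finsupp.single_le_iff.mp hle
    simp [Finsupp.single_apply] at this
    omega
  · intro hle
    have := Finsupp.single_le_iff.mp hle
    simp [Finsupp.single_apply] at this
    omega
noncomputable def lin (c d : ℝ) : Polynomial ℝ := Polynomial.C c * Polynomial.X + Polynomial.C d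

lemma lin_ne_zero {c d : ℝ} (h : ¬(c = 0 ∧ d = 0)) : lin c d ≠ 0 := by
  intro h0
  by_cases hc : c = 0
  · have hd : d ≠ 0 := fun hd => h ⟨hc, hd⟩
    apply hd
    have := congrArg (fun p => Polynomial.coeff p 0) h0
    simpa [lin] using this
  · apply hc
    have := congrArg (fun p => Polynomial.coeff p 1) h0
    simpa [lin] using this

lemma lin_natDegree_le (c d : ℝ) : (lin c d).natDegree ≤ 1 :=
  Polynomial.natDegree_linear_le

lemma lin_roots (c d : ℝ) : Multiset.card (lin c d).roots = (lin c d).natDegree := by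
  by_cases hc : c = 0
  · subst hc
    simp [lin, Polynomial.roots_C]
  · have hlin : lin c d = Polynomial.C c * (Polynomial.X - Polynomial.C (-(d / c))) := by
      rw [lin, mul_sub, ← Polynomial.C_mul]
      have hx : c * -(d / c) = -d := by field_simp
      rw [hx, Polynomial.C_neg, sub_neg_eq_add]
    have h1 : (lin c d).roots = {-(d / c)} := by
      rw [hlin, Polynomial.roots_C_mul _ hc, Polynomial.roots_X_sub_C]
    have h2 : (lin c d).natDegree = 1 := Polynomial.natDegree_linear hc
    rw [h1, h2]
    rfl

lemma lin_ntd_le {c d : ℝ} (h : ¬(c = 0 ∧ d = 0)) : (lin c d).natTrailingDegree ≤ 1 := by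
  by_cases hd : d = 0
  · subst hd
    have hc : c ≠ 0 := fun hc => h ⟨hc, rfl⟩
    rw [lin, Polynomial.C_0, add_zero]
    rw [Polynomial.natTrailingDegree_mul (Polynomial.C_ne_zero.mpr hc) Polynomial.X_ne_zero,
      Polynomial.natTrailingDegree_C, Polynomial.natTrailingDegree_X]
  · rw [Polynomial.natTrailingDegree_eq_zero.mpr (Or.inr (by simp [lin, hd]))]
    omega

lemma lin_ntd_eq_zero {c d : ℝ} (hd : d ≠ 0) : (lin c d).natTrailingDegree = 0 :=
  Polynomial.natTrailingDegree_eq_zero.mpr (Or.inr (by simp [lin, hd]))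

lemma lin_natDegree_eq_one {c : ℝ} (hc : c ≠ 0) (d : ℝ) : (lin c d).natDegree = 1 :=
  Polynomial.natDegree_linear hc

lemma ntd_prod {ι : Type*} (s : Finset ι) (f : ι → Polynomial ℝ) (hf : ∀ i ∈ s, f i ≠ 0) :
    (∏ i ∈ s, f i).natTrailingDegree = ∑ i ∈ s, (f i).natTrailingDegree := by
  classical
  induction s using Finset.induction_on with
  | empty => simp
  | @insert x s hx ih =>
    rw [Finset.prod_insert hx, Finset.sum_insert hx,
      Polynomial.natTrailingDegree_mul (hf x (Finset.mem_insert_self x s))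
        (Finset.prod_ne_zero_iff.mpr fun i hi => hf i (Finset.mem_insert_of_mem hi)),
      ih fun i hi => hf i (Finset.mem_insert_of_mem hi)]

lemma sum_le_one {n : ℕ} (g : Fin n → ℕ) (h1 : ∀ i, g i ≤ 1)
    (h2 : ∀ i j, i ≠ j → g i = 0 ∨ g j = 0) : ∑ i, g i ≤ 1 := by
  by_cases he : ∀ i, g i = 0
  · simp [he]
  · push_neg at he
    obtain ⟨i0, hi0⟩ := he
    have hrest : ∀ j ∈ Finset.univ, j ≠ i0 → g j = 0 := fun j _ hj =>
      (h2 j i0 hj).resolve_right hi0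
    rw [Finset.sum_eq_single i0 hrest (by simp)]
    exact h1 i0

lemma sum_ge_sub_one {n : ℕ} (g : Fin n → ℕ) (h1 : ∀ i, g i = 0 ∨ g i = 1)
    (h2 : ∀ i j, i ≠ j → g i = 1 ∨ g j = 1) : n - 1 ≤ ∑ i, g i := by
  by_cases he : ∀ i, g i = 1
  · simp only [he]
    rw [Finset.sum_const, Finset.card_univ, Fintype.card_fin, smul_eq_mul, mul_one]
    omega
  · push_neg at he
    obtain ⟨i0, hi0⟩ := he
    have hrest : ∀ j ∈ Finset.univ.erase i0, g j = 1 := by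
      intro j hj
      have hji0 : j ≠ i0 := (Finset.mem_erase.mp hj).1
      exact (h2 j i0 hji0).resolve_right hi0
    have : ∑ i, g i = g i0 + ∑ j ∈ Finset.univ.erase i0, g j :=
      (Finset.add_sum_erase _ g (Finset.mem_univ i0)).symm
    rw [this, Finset.sum_congr rfl hrest, Finset.sum_const, smul_eq_mul, mul_one,
      Finset.card_erase_of_mem (Finset.mem_univ i0), Finset.card_univ, Fintype.card_fin]
    omega
end NoSqfAux

open NoSqfAux in
/-- For `0 < a ≤ b` and `r ≤ a + b - 1`, no nonzero homogeneous polynomial `G`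
of degree `r` in `ℝ[y₀,y₁]` lying in the ideal `(y₀^{a+1}, y₁^{b+1})` is a
product of `r` pairwise linearly independent real linear forms. -/
theorem no_squarefree_form_in_perp_ideal_low_degree_real
    (a b r : ℕ) (ha : 0 < a) (hab : a ≤ b) (hr : r ≤ a + b - 1)
    (G : MvPolynomial (Fin 2) ℝ) (hG0 : G ≠ 0) (hGh : G.IsHomogeneous r)
    (hGI : G ∈ Ideal.span {(X 0 : MvPolynomial (Fin 2) ℝ) ^ (a + 1), X 1 ^ (b + 1)}) :
    ¬ ∃ L : Fin r → MvPolynomial (Fin 2) ℝ,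
      (∀ i, (L i).IsHomogeneous 1) ∧
      (∀ i j, i ≠ j → ∀ c : ℝ, L i ≠ c • L j) ∧
      G = ∏ i, L i := by
  rintro ⟨L, hL1, hLind, hLprod⟩
  classical
  set c : Fin r → ℝ := fun i => coeff (Finsupp.single 0 1) (L i) with hcdef
  set d : Fin r → ℝ := fun i => coeff (Finsupp.single 1 1) (L i) with hddef
  have hdecomp : ∀ i, L i = C (c i) * X 0 + C (d i) * X 1 := fun i => hom1_decomp _ (hL1 i)
  have hLne : ∀ i, L i ≠ 0 := by
    intro i hLi
    apply hG0
    rw [hLprod]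
    exact Finset.prod_eq_zero (Finset.mem_univ i) hLi
  have hcd : ∀ i, ¬(c i = 0 ∧ d i = 0) := by
    rintro i ⟨h1, h2⟩
    apply hLne i
    rw [hdecomp i, h1, h2]
    simp
  have hcc : ∀ i j, i ≠ j → ¬(c i = 0 ∧ c j = 0) := by
    rintro i j hij ⟨hi, hj⟩
    have hdj : d j ≠ 0 := fun h => hcd j ⟨hj, h⟩
    refine hLind i j hij (d i / d j) ?_
    rw [hdecomp i, hdecomp j, hi, hj, smul_eq_C_mul, map_zero, zero_mul, zero_add, zero_add,
      ← mul_assoc, ← C_mul, div_mul_cancel₀ _ hdj]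
  have hdd : ∀ i j, i ≠ j → ¬(d i = 0 ∧ d j = 0) := by
    rintro i j hij ⟨hi, hj⟩
    have hcj : c j ≠ 0 := fun h => hcd j ⟨h, hj⟩
    refine hLind i j hij (c i / c j) ?_
    rw [hdecomp i, hdecomp j, hi, hj, smul_eq_C_mul, map_zero, zero_mul, add_zero, add_zero,
      ← mul_assoc, ← C_mul, div_mul_cancel₀ _ hcj]
  set p : Polynomial ℝ := φ G with hpdef
  have hφL : ∀ i, φ (L i) = lin (c i) (d i) := by
    intro i
    rw [hdecomp i, lin]
    simp [φ, Polynomial.algebraMap_eq]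
  have hp : p = ∏ i, lin (c i) (d i) := by
    rw [hpdef, hLprod, map_prod]
    exact Finset.prod_congr rfl fun i _ => hφL i
  have hlinne : ∀ i ∈ Finset.univ, lin (c i) (d i) ≠ (0 : Polynomial ℝ) :=
    fun i _ => lin_ne_zero (hcd i)
  have hprodne : (∏ i, lin (c i) (d i)) ≠ 0 := Finset.prod_ne_zero_iff.mpr hlinne
  have hp0 : p ≠ 0 := by rw [hp]; exact hprodne
  have hdeg : p.natDegree = ∑ i, (lin (c i) (d i)).natDegree := by
    rw [hp]
    exact Polynomial.natDegree_prod _ _ hlinne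
  have hdeg_le : p.natDegree ≤ r := by
    rw [hdeg]
    calc ∑ i, (lin (c i) (d i)).natDegree ≤ ∑ _i : Fin r, 1 :=
          Finset.sum_le_sum fun i _ => lin_natDegree_le _ _
      _ = r := by simp
  have hdeg_ge : r - 1 ≤ p.natDegree := by
    rw [hdeg]
    apply sum_ge_sub_one
    · intro i
      by_cases hci : c i = 0
      · left
        rw [show lin (c i) (d i) = Polynomial.C (d i) by
          rw [lin, hci, Polynomial.C_0, zero_mul, zero_add]]
        exact Polynomial.natDegree_C _
      · right
        exact lin_natDegree_eq_one hci _
    · intro i j hij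
      by_cases hci : c i = 0
      · have hcj : c j ≠ 0 := fun h => hcc i j hij ⟨hci, h⟩
        exact Or.inr (lin_natDegree_eq_one hcj _)
      · exact Or.inl (lin_natDegree_eq_one hci _)
  have hroots : p.roots = Finset.univ.val.bind fun i => (lin (c i) (d i)).roots := by
    rw [hp]
    exact Polynomial.roots_prod _ _ hprodne
  have hrc : Multiset.card p.roots = p.natDegree := by
    rw [hroots, Multiset.card_bind, hdeg]
    exact Finset.sum_congr rfl fun i _ => lin_roots _ _
  have hntd : p.natTrailingDegree ≤ 1 := by
    rw [hp, ntd_prod _ _ hlinne]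
    apply sum_le_one
    · exact fun i => lin_ntd_le (hcd i)
    · intro i j hij
      by_cases hdi : d i = 0
      · have hdj : d j ≠ 0 := fun h => hdd i j hij ⟨hdi, h⟩
        exact Or.inr (lin_ntd_eq_zero hdj)
      · exact Or.inl (lin_ntd_eq_zero hdi)
  have gap : ∀ k, k ≤ a → k ≤ r → r ≤ b + k → p.coeff k = 0 := by
    intro k h1 h2 h3
    rw [hpdef, coeff_φ G r hGh k h2]
    exact coeff_zero_of_mem a b r k G hGI h1 (by omega)
  have F1 : p.coeff p.natTrailingDegree ≠ 0 := Polynomial.coeff_natTrailingDegree_ne_zero.mpr hp0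
  have F2 : p.coeff p.natDegree ≠ 0 := Polynomial.leadingCoeff_ne_zero.mpr hp0
  have hntd_le : p.natTrailingDegree ≤ p.natDegree := Polynomial.natTrailingDegree_le_natDegree p
  have hstep1 : b + p.natTrailingDegree < r := by
    by_contra hcon
    push_neg at hcon
    exact F1 (gap _ (by omega) (by omega) (by omega))
  have hstep2 : a < p.natDegree := by
    by_contra hcon
    push_neg at hcon
    exact F2 (gap _ hcon (by omega) (by omega))
  exact univariate_gap p hrc (a - 1)
    (gap _ (by omega) (by omega) (by omega))
    (by rw [show a - 1 + 1 = a by omega]; exact gap _ (by omega) (by omega) (by omega))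
    ⟨p.natTrailingDegree, by omega, F1⟩
    (by omega)
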